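/- Let q > 2 be an even prime power, F a finite field with q elements, K an extension field of F with [K:F] = 2n+1 (n ≥ 1), and let α ∈ F with α ≠ 0 and α ≠ 1. Let S ⊆ K × K be the set S = { (x^2, x^{q+1}) : x ∈ K \ {0} } ∪ { (x^2, α·x^{q+1}) : x ∈ K \ {0} } (α identified with its image in K). If u, v, w ∈ S are such that no two of u, v, w are F-proportional (i.e. none is a nonzero F-scalar multiple of another), then u, v, w are linearly independent over F. -/
import Mathlib

open Polynomial in
/-- Fixed points of `x ↦ x^q` in `K` lie in the image of `F`. -/
lemma aux_fixed {F K : Type*} [Field F] [Field K] [Fintype F] [Algebra F K]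
    {q : ℕ} (hF : Fintype.card F = q) {t : K} (ht : t ^ q = t) :
    ∃ c : F, algebraMap F K c = t := by
  classical
  have hq1 : 1 < q := hF ▸ Fintype.one_lt_card
  set p : K[X] := X ^ q - X with hp
  have hpne : p ≠ 0 := by
    intro h
    have hXX : (X : K[X]) ^ q = X := by rwa [hp, sub_eq_zero] at h
    have := congrArg natDegree hXX
    rw [natDegree_X_pow, natDegree_X] at this
    omega
  have hdeg : p.natDegree ≤ q := by
    refine le_trans (natDegree_sub_le _ _) ?_
    rw [natDegree_X_pow, natDegree_X]
    omega
  have hroots : p.roots.toFinset.card ≤ q :=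
    le_trans (Multiset.toFinset_card_le _) (le_trans (card_roots' p) hdeg)
  have hsub : (Finset.univ.image (algebraMap F K)) ⊆ p.roots.toFinset := by
    intro z hz
    simp only [Finset.mem_image] at hz
    obtain ⟨c, -, rfl⟩ := hz
    rw [Multiset.mem_toFinset, mem_roots hpne]
    have : (algebraMap F K c) ^ q = algebraMap F K c := by
      rw [← map_pow, ← hF, FiniteField.pow_card]
    simp [IsRoot, hp, this]
  have hcard : (Finset.univ.image (algebraMap F K)).card = q := by
    rw [Finset.card_image_of_injective _ (algebraMap F K).injective, Finset.card_univ, hF]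
  have heq : Finset.univ.image (algebraMap F K) = p.roots.toFinset :=
    Finset.eq_of_subset_of_card_le hsub (by omega)
  have htmem : t ∈ p.roots.toFinset := by
    rw [Multiset.mem_toFinset, mem_roots hpne]
    simp [IsRoot, hp, ht]
  rw [← heq] at htmem
  simpa using Finset.mem_image.mp htmem

/-- `x ↦ x^{q+1}` is injective on nonzero elements of `K`, `|K| = q^{2n+1}`, `q` even. -/
lemma aux_pow_inj {K : Type*} [Field K] [Fintype K] {q n : ℕ} (heven : Even q) (hq : 0 < q)
    (hcardK : Fintype.card K = q ^ (2 * n + 1)) {s t : K} (hs : s ≠ 0) (ht : t ≠ 0)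
    (h : s ^ (q + 1) = t ^ (q + 1)) : s = t := by
  have hdvd : (q + 1) ∣ q ^ (2 * n + 1) + 1 := by
    have h1 := Odd.add_dvd_pow_add_pow (q : ℤ) 1 (n := 2 * n + 1) ⟨n, by ring⟩
    rw [one_pow] at h1
    exact_mod_cast h1
  have h1 : 1 ≤ q ^ (2 * n + 1) := Nat.one_le_pow _ _ hq
  have hcop : Nat.Coprime (q + 1) (q ^ (2 * n + 1) - 1) := by
    have h₁ := Nat.gcd_dvd_left (q + 1) (q ^ (2 * n + 1) - 1)
    have h₂ := Nat.gcd_dvd_right (q + 1) (q ^ (2 * n + 1) - 1)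
    have h₃ : Nat.gcd (q + 1) (q ^ (2 * n + 1) - 1) ∣ q ^ (2 * n + 1) + 1 :=
      dvd_trans h₁ hdvd
    have hd2 : Nat.gcd (q + 1) (q ^ (2 * n + 1) - 1) ∣ 2 := by
      have := Nat.dvd_sub h₃ h₂
      have he : q ^ (2 * n + 1) + 1 - (q ^ (2 * n + 1) - 1) = 2 := by omega
      rwa [he] at this
    have hodd : ¬ (2 ∣ q + 1) := by
      obtain ⟨r, hr⟩ := heven
      omega
    rcases (Nat.dvd_prime Nat.prime_two).1 hd2 with h | h
    · exact h
    · exact absurd (h ▸ h₁) hodd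
  set r := s * t⁻¹ with hr
  have hrne : r ≠ 0 := mul_ne_zero hs (inv_ne_zero ht)
  have hr1 : r ^ (q + 1) = 1 := by
    rw [hr, mul_pow, inv_pow, h, mul_inv_cancel₀ (pow_ne_zero _ ht)]
  have hr2 : r ^ (q ^ (2 * n + 1) - 1) = 1 := by
    rw [← hcardK]; exact FiniteField.pow_card_sub_one_eq_one r hrne
  have ho : orderOf r ∣ 1 := by
    rw [← hcop]
    exact Nat.dvd_gcd (orderOf_dvd_of_pow_eq_one hr1) (orderOf_dvd_of_pow_eq_one hr2)
  have : r = 1 := orderOf_eq_one_iff.mp (Nat.dvd_one.mp ho)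
  rw [hr] at this
  field_simp at this
  exact this

/-- No solution to `t^q + t = δ` for `δ` a nonzero element fixed by `x↦x^q`. -/
lemma aux_AS {K : Type*} [Field K] [Fintype K] [CharP K 2] {q m n : ℕ} (hq : q = 2 ^ m)
    (hcardK : Fintype.card K = q ^ (2 * n + 1)) {t δ : K}
    (hδq : δ ^ q = δ) (hδ : δ ≠ 0) (h : t ^ q + t = δ) : False := by
  haveI : Fact (Nat.Prime 2) := ⟨Nat.prime_two⟩
  have hfr : ∀ a b : K, (a + b) ^ q = a ^ q + b ^ q := by
    intro a b; rw [hq]; exact add_pow_char_pow a b 2 m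
  have htq : t ^ q = t + δ := by
    have := eq_sub_of_add_eq h
    rwa [CharTwo.sub_eq_add, add_comm] at this
  have key : ∀ k : ℕ, t ^ q ^ k = t + (if Even k then 0 else δ) := by
    intro k
    induction k with
    | zero => simp
    | succ k ih =>
      have hstep : t ^ q ^ (k + 1) = (t ^ q ^ k) ^ q := by
        rw [← pow_mul, pow_succ]
      rw [hstep, ih]
      by_cases hk : Even k
      · rw [if_pos hk, if_neg (by simpa [Nat.even_add_one] using hk), add_zero, htq]
      · rw [if_neg hk, if_pos (by simpa [Nat.even_add_one] using hk), hfr, htq, hδq, add_zero]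
        rw [add_assoc, CharTwo.add_self_eq_zero, add_zero]
  have hodd : ¬ Even (2 * n + 1) := by simp [Nat.even_add_one, parity_simps]
  have hk := key (2 * n + 1)
  have hcy : t ^ q ^ (2 * n + 1) = t := by rw [← hcardK, FiniteField.pow_card]
  rw [hcy, if_neg hodd] at hk
  rw [left_eq_add] at hk
  exact hδ hk

/-- Proposition: for `q > 2` even and `α ∈ F \ {0, 1}`, `𝒱₁ ∪ 𝒱_α` is a cap:
if `u, v, w` are vectors of the form `(x², x^{q+1})` or `(x², α x^{q+1})`,
`x ≠ 0`, no two of which are `F`-proportional, then they are `F`-linearly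
independent. -/
theorem union_veronese_is_cap_even
    (q n : ℕ) (hn : 1 ≤ n) (F K : Type*) [Field F] [Field K]
    [Fintype F] [Fintype K] [Algebra F K]
    (hF : Fintype.card F = q) (heven : Even q) (hq2 : 2 < q)
    (hK : Module.finrank F K = 2 * n + 1)
    (α : F) (hα0 : α ≠ 0) (hα1 : α ≠ 1)
    (u v w : K × K)
    (hu : ∃ x : K, x ≠ 0 ∧
      (u = (x ^ 2, x ^ (q + 1)) ∨ u = (x ^ 2, algebraMap F K α * x ^ (q + 1))))
    (hv : ∃ x : K, x ≠ 0 ∧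
      (v = (x ^ 2, x ^ (q + 1)) ∨ v = (x ^ 2, algebraMap F K α * x ^ (q + 1))))
    (hw : ∃ x : K, x ≠ 0 ∧
      (w = (x ^ 2, x ^ (q + 1)) ∨ w = (x ^ 2, algebraMap F K α * x ^ (q + 1))))
    (hprop : ∀ c : F, c ≠ 0 → u ≠ c • v ∧ u ≠ c • w ∧ v ≠ c • w) :
    LinearIndependent F ![u, v, w] := by
  classical
  have hq0 : 0 < q := by omega
  -- characteristic 2 setup
  haveI := ringChar.charP F
  obtain ⟨k, hprime, hcard⟩ := FiniteField.card F (ringChar F)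
  have hr2 : ringChar F = 2 := by
    have h2d : 2 ∣ ringChar F ^ (k : ℕ) := by
      rw [← hcard, hF]; exact heven.two_dvd
    exact ((Nat.prime_dvd_prime_iff_eq Nat.prime_two hprime).mp
      (Nat.Prime.dvd_of_dvd_pow Nat.prime_two h2d)).symm
  haveI hF2 : CharP F 2 := hr2 ▸ ringChar.charP F
  haveI hK2 : CharP K 2 := charP_of_injective_algebraMap (algebraMap F K).injective 2
  haveI : Fact (Nat.Prime 2) := ⟨Nat.prime_two⟩
  have hq2m : q = 2 ^ (k : ℕ) := by rw [← hF, hcard, hr2]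
  have h2K : (2 : K) = 0 := CharTwo.two_eq_zero
  have hfr : ∀ a b : K, (a + b) ^ q = a ^ q + b ^ q := by
    intro a b; rw [hq2m]; exact add_pow_char_pow a b 2 k
  have hfq : ∀ c : F, c ^ q = c := by intro c; rw [← hF]; exact FiniteField.pow_card c
  have hcardK : Fintype.card K = q ^ (2 * n + 1) := by
    rw [Module.card_eq_pow_finrank (K := F) (V := K), hF, hK]
  -- extract data
  obtain ⟨x, hx0, hux⟩ := hu
  obtain ⟨y, hy0, hvx⟩ := hv
  obtain ⟨z, hz0, hwx⟩ := hw
  set αK := algebraMap F K α with hαK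
  obtain ⟨ω₁, hω₁, hu1⟩ : ∃ ω : K, (ω = 1 ∨ ω = αK) ∧ u = (x ^ 2, ω * x ^ (q + 1)) := by
    rcases hux with h | h
    exacts [⟨1, Or.inl rfl, by rw [h, one_mul]⟩, ⟨αK, Or.inr rfl, h⟩]
  obtain ⟨ω₂, hω₂, hv1⟩ : ∃ ω : K, (ω = 1 ∨ ω = αK) ∧ v = (y ^ 2, ω * y ^ (q + 1)) := by
    rcases hvx with h | h
    exacts [⟨1, Or.inl rfl, by rw [h, one_mul]⟩, ⟨αK, Or.inr rfl, h⟩]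
  obtain ⟨ω₃, hω₃, hw1⟩ : ∃ ω : K, (ω = 1 ∨ ω = αK) ∧ w = (z ^ 2, ω * z ^ (q + 1)) := by
    rcases hwx with h | h
    exacts [⟨1, Or.inl rfl, by rw [h, one_mul]⟩, ⟨αK, Or.inr rfl, h⟩]
  have hαK0 : αK ≠ 0 := by
    simpa [hαK] using (map_ne_zero (algebraMap F K)).mpr hα0
  have hαK1 : αK ≠ 1 := by
    intro h
    exact hα1 ((algebraMap F K).injective (by simpa [hαK] using h))
  have hω₁0 : ω₁ ≠ 0 := by rcases hω₁ with rfl | rfl; exacts [one_ne_zero, hαK0]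
  have hω₂0 : ω₂ ≠ 0 := by rcases hω₂ with rfl | rfl; exacts [one_ne_zero, hαK0]
  have hω₃0 : ω₃ ≠ 0 := by rcases hω₃ with rfl | rfl; exacts [one_ne_zero, hαK0]
  have hαKq : αK ^ q = αK := by rw [hαK, ← map_pow, hfq]
  have hω₁q : ω₁ ^ q = ω₁ := by rcases hω₁ with rfl | rfl; exacts [one_pow q, hαKq]
  have hω₂q : ω₂ ^ q = ω₂ := by rcases hω₂ with rfl | rfl; exacts [one_pow q, hαKq]
  have hω₃q : ω₃ ^ q = ω₃ := by rcases hω₃ with rfl | rfl; exacts [one_pow q, hαKq]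
  -- nonzero vectors
  have hune : u ≠ 0 := by
    rw [hu1]; intro h
    exact pow_ne_zero 2 hx0 (congrArg Prod.fst h)
  have hvne : v ≠ 0 := by
    rw [hv1]; intro h
    exact pow_ne_zero 2 hy0 (congrArg Prod.fst h)
  have hwne : w ≠ 0 := by
    rw [hw1]; intro h
    exact pow_ne_zero 2 hz0 (congrArg Prod.fst h)
  -- two-term dependence is impossible
  have pair : ∀ (a b : F) (p r : K × K), p ≠ 0 → r ≠ 0 → (∀ c : F, c ≠ 0 → p ≠ c • r) →
      a • p + b • r = 0 → a = 0 ∧ b = 0 := by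
    intro a b p r hp hr hpr h
    by_cases ha : a = 0
    · refine ⟨ha, ?_⟩
      rw [ha, zero_smul, zero_add] at h
      rcases smul_eq_zero.mp h with h' | h'
      · exact h'
      · exact absurd h' hr
    · exfalso
      have hb : b ≠ 0 := by
        rintro rfl
        rw [zero_smul, add_zero] at h
        rcases smul_eq_zero.mp h with h' | h'
        · exact ha h'
        · exact hp h'
      refine hpr (-(a⁻¹ * b)) (by simp [ha, hb]) ?_
      calc p = a⁻¹ • (a • p) := by rw [smul_smul, inv_mul_cancel₀ ha, one_smul]
        _ = a⁻¹ • (-(b • r)) := by rw [eq_neg_of_add_eq_zero_left h]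
        _ = (-(a⁻¹ * b)) • r := by rw [smul_neg, smul_smul, ← neg_smul]
  rw [Fintype.linearIndependent_iff]
  intro g hg
  rw [Fin.sum_univ_three] at hg
  simp only [Matrix.cons_val_zero, Matrix.cons_val_one, Matrix.head_cons,
    Matrix.cons_val_two, Matrix.tail_cons] at hg
  suffices hall : g 0 = 0 ∧ g 1 = 0 ∧ g 2 = 0 by
    intro i; fin_cases i <;> simp [hall.1, hall.2.1, hall.2.2]
  by_cases h0 : g 0 = 0
  · rw [h0, zero_smul, zero_add] at hg
    obtain ⟨h1, h2⟩ := pair _ _ _ _ hvne hwne (fun c hc => (hprop c hc).2.2) hg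
    exact ⟨h0, h1, h2⟩
  by_cases h1 : g 1 = 0
  · rw [h1, zero_smul, add_zero] at hg
    obtain ⟨h0', _⟩ := pair _ _ _ _ hune hwne (fun c hc => (hprop c hc).2.1) hg
    exact absurd h0' h0
  by_cases hc2 : g 2 = 0
  · rw [hc2, zero_smul, add_zero] at hg
    obtain ⟨h0', _⟩ := pair _ _ _ _ hune hvne (fun c hc => (hprop c hc).1) hg
    exact absurd h0' h0
  exfalso
  -- square roots of coefficients
  obtain ⟨a', ha'⟩ := FiniteField.isSquare_of_char_two hr2 (g 0)
  obtain ⟨b', hb'⟩ := FiniteField.isSquare_of_char_two hr2 (g 1)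
  obtain ⟨c', hc'⟩ := FiniteField.isSquare_of_char_two hr2 (g 2)
  have ha'0 : a' ≠ 0 := fun h => h0 (by rw [ha', h, mul_zero])
  have hb'0 : b' ≠ 0 := fun h => h1 (by rw [hb', h, mul_zero])
  have hc'0 : c' ≠ 0 := fun h => hc2 (by rw [hc', h, mul_zero])
  obtain ⟨A, hA⟩ : ∃ t, t = algebraMap F K a' := ⟨_, rfl⟩
  obtain ⟨B, hB⟩ : ∃ t, t = algebraMap F K b' := ⟨_, rfl⟩
  obtain ⟨C, hC⟩ : ∃ t, t = algebraMap F K c' := ⟨_, rfl⟩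
  have hAne : A ≠ 0 := by rw [hA]; exact (map_ne_zero _).mpr ha'0
  have hBne : B ≠ 0 := by rw [hB]; exact (map_ne_zero _).mpr hb'0
  have hCne : C ≠ 0 := by rw [hC]; exact (map_ne_zero _).mpr hc'0
  obtain ⟨X, hX⟩ : ∃ t, t = A * x := ⟨_, rfl⟩
  obtain ⟨Y, hY⟩ : ∃ t, t = B * y := ⟨_, rfl⟩
  obtain ⟨Z, hZ⟩ : ∃ t, t = C * z := ⟨_, rfl⟩
  have hXne : X ≠ 0 := by rw [hX]; exact mul_ne_zero hAne hx0
  have hYne : Y ≠ 0 := by rw [hY]; exact mul_ne_zero hBne hy0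
  have hZne : Z ≠ 0 := by rw [hZ]; exact mul_ne_zero hCne hz0
  -- coordinatewise equations
  rw [hu1, hv1, hw1, Prod.smul_mk, Prod.smul_mk, Prod.smul_mk, Prod.mk_add_mk, Prod.mk_add_mk,
    Prod.mk_eq_zero] at hg
  obtain ⟨e1, e2⟩ := hg
  simp only [Algebra.smul_def] at e1 e2
  have key_pow : ∀ d d' : F, d = d' * d' → algebraMap F K d' ^ 2 = algebraMap F K d ∧
      algebraMap F K d' ^ (q + 1) = algebraMap F K d := by
    intro d d' hd
    constructor
    · rw [← map_pow, pow_two, ← hd]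
    · rw [← map_pow, pow_succ, hfq, ← pow_two, pow_two, ← hd]
  have hXsq : X ^ 2 = algebraMap F K (g 0) * x ^ 2 := by
    rw [hX, hA, mul_pow, (key_pow _ _ ha').1]
  have hYsq : Y ^ 2 = algebraMap F K (g 1) * y ^ 2 := by
    rw [hY, hB, mul_pow, (key_pow _ _ hb').1]
  have hZsq : Z ^ 2 = algebraMap F K (g 2) * z ^ 2 := by
    rw [hZ, hC, mul_pow, (key_pow _ _ hc').1]
  have hXq1 : X ^ (q + 1) = algebraMap F K (g 0) * x ^ (q + 1) := by
    rw [hX, hA, mul_pow, (key_pow _ _ ha').2]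
  have hYq1 : Y ^ (q + 1) = algebraMap F K (g 1) * y ^ (q + 1) := by
    rw [hY, hB, mul_pow, (key_pow _ _ hb').2]
  have hZq1 : Z ^ (q + 1) = algebraMap F K (g 2) * z ^ (q + 1) := by
    rw [hZ, hC, mul_pow, (key_pow _ _ hc').2]
  have E1 : X ^ 2 + Y ^ 2 + Z ^ 2 = 0 := by
    rw [hXsq, hYsq, hZsq]; linear_combination e1
  have E2 : ω₁ * X ^ (q + 1) + ω₂ * Y ^ (q + 1) + ω₃ * Z ^ (q + 1) = 0 := by
    rw [hXq1, hYq1, hZq1]; linear_combination e2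
  have hZXY : Z = X + Y := by
    have h3 : (X + Y + Z) ^ 2 = 0 := by
      rw [CharTwo.add_sq, CharTwo.add_sq]; linear_combination E1
    have h4 : X + Y + Z = 0 := pow_eq_zero_iff two_ne_zero |>.mp h3
    linear_combination h4 - (X + Y) * h2K
  have EM : ω₁ * (X ^ q * X) + ω₂ * (Y ^ q * Y) + ω₃ * ((X ^ q + Y ^ q) * (X + Y)) = 0 := by
    have h := E2
    rw [hZXY] at h
    simp only [pow_succ] at h
    rw [hfr] at h
    linear_combination h
  -- helpers to conclude proportionality of u and v
  have finish_uv : ∀ μ : F, μ ≠ 0 → ω₁ = ω₂ → x = algebraMap F K μ * y → False := by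
    intro μ hμ h12 hxy
    have hμq : algebraMap F K μ ^ (q + 1) = algebraMap F K μ ^ 2 := by
      rw [← map_pow, ← map_pow]
      congr 1
      rw [pow_succ, hfq, pow_two]
    refine (hprop (μ ^ 2) (pow_ne_zero 2 hμ)).1 ?_
    rw [hu1, hv1, Prod.smul_mk, Prod.mk.injEq]
    constructor
    · rw [Algebra.smul_def, map_pow, hxy]; ring
    · rw [Algebra.smul_def, map_pow, hxy, mul_pow, hμq, h12]; ring
  have hsolve : ∀ c1 c2 : F, c1 ≠ 0 → algebraMap F K c1 * x = algebraMap F K c2 * y →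
      x = algebraMap F K (c2 * c1⁻¹) * y := by
    intro c1 c2 hc1 h
    have hc1K : algebraMap F K c1 ≠ 0 := (map_ne_zero _).mpr hc1
    rw [map_mul, map_inv₀]
    field_simp
    linear_combination h
  by_cases h12 : ω₁ = ω₂
  · by_cases h13 : ω₃ = ω₁
    · -- Case A : all three ω equal
      rw [← h12, h13] at EM
      have hA' : ω₁ * (X * Y ^ q + X ^ q * Y) = 0 := by
        linear_combination EM - ω₁ * (X ^ q * X + Y ^ q * Y) * h2K
      have hcross : X * Y ^ q = X ^ q * Y := by
        have h' : X * Y ^ q + X ^ q * Y = 0 := by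
          rcases mul_eq_zero.mp hA' with h' | h'
          · exact absurd h' hω₁0
          · exact h'
        linear_combination h' - (X ^ q * Y) * h2K
      have hYq : Y ^ q ≠ 0 := pow_ne_zero _ hYne
      have htq : (X * Y⁻¹) ^ q = X * Y⁻¹ := by
        rw [mul_pow X Y⁻¹ q, inv_pow, ← div_eq_mul_inv, ← div_eq_mul_inv,
          div_eq_div_iff hYq hYne]
        linear_combination -hcross
      obtain ⟨c, hc⟩ := aux_fixed hF htq
      have hcne : c ≠ 0 := by
        rintro rfl
        rw [map_zero] at hc
        exact mul_ne_zero hXne (inv_ne_zero hYne) hc.symm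
      have hxyK : algebraMap F K a' * x = algebraMap F K (c * b') * y := by
        have h5 : algebraMap F K c * Y = X := by
          rw [hc]; field_simp
        rw [hX, hY, hA, hB] at h5
        rw [map_mul]
        linear_combination -h5
      exact finish_uv (c * b' * a'⁻¹)
        (mul_ne_zero (mul_ne_zero hcne hb'0) (inv_ne_zero ha'0)) h12
        (hsolve a' (c * b') ha'0 hxyK)
    · -- Case B : ω₁ = ω₂ ≠ ω₃
      rw [← h12] at EM
      have hω'0 : ω₁ + ω₃ ≠ 0 := by
        intro h
        have h' := eq_neg_of_add_eq_zero_left h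
        rw [CharTwo.neg_eq] at h'
        exact h13 h'.symm
      have hω'q : (ω₁ + ω₃) ^ q = ω₁ + ω₃ := by rw [hfr, hω₁q, hω₃q]
      have hkey : ((ω₁ + ω₃) * X + ω₃ * Y) ^ (q + 1) = (ω₁ * Y) ^ (q + 1) := by
        rw [pow_succ, pow_succ, hfr, mul_pow (ω₁ + ω₃) X q, mul_pow ω₃ Y q,
          mul_pow ω₁ Y q, hω'q, hω₃q, hω₁q]
        linear_combination (ω₁ + ω₃) * EM - ω₁ * (ω₁ + ω₃) * (Y ^ q * Y) * h2K
      have hzY : ω₁ * Y ≠ 0 := mul_ne_zero hω₁0 hYne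
      have hs0 : (ω₁ + ω₃) * X + ω₃ * Y ≠ 0 := by
        intro h
        rw [h, zero_pow (by omega : q + 1 ≠ 0)] at hkey
        exact hzY (pow_eq_zero_iff (by omega : q + 1 ≠ 0) |>.mp hkey.symm)
      have heq := aux_pow_inj heven hq0 hcardK hs0 hzY hkey
      have hXY : X = Y := by
        apply mul_left_cancel₀ hω'0
        linear_combination heq - ω₃ * Y * h2K
      have hxyK : algebraMap F K a' * x = algebraMap F K b' * y := by
        rw [hX, hY, hA, hB] at hXY
        exact hXY
      exact finish_uv (b' * a'⁻¹) (mul_ne_zero hb'0 (inv_ne_zero ha'0)) h12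
        (hsolve a' b' ha'0 hxyK)
  · -- ω₁ ≠ ω₂ : then ω₃ is one of them, Artin–Schreier style contradiction
    have h3or : ω₃ = ω₁ ∨ ω₃ = ω₂ := by
      rcases hω₁ with rfl | rfl <;> rcases hω₂ with rfl | rfl <;> rcases hω₃ with rfl | rfl <;>
        first
          | exact absurd rfl h12
          | exact Or.inl rfl
          | exact Or.inr rfl
    have h12' : ω₁ + ω₂ ≠ 0 := by
      intro h
      have h' := eq_neg_of_add_eq_zero_left h
      rw [CharTwo.neg_eq] at h'
      exact h12 h'
    have hsum_q : (ω₁ + ω₂) ^ q = ω₁ + ω₂ := by rw [hfr, hω₁q, hω₂q]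
    rcases h3or with h3 | h3
    · -- Case C : ω₃ = ω₁
      rw [h3] at EM
      have htY : (X * Y⁻¹) * Y = X := by field_simp
      have htYq : (X * Y⁻¹) ^ q * Y ^ q = X ^ q := by rw [← mul_pow, htY]
      have hδ1 : ω₁ * ((ω₁ + ω₂) * ω₁⁻¹) = ω₁ + ω₂ := by field_simp
      have hδq : ((ω₁ + ω₂) * ω₁⁻¹) ^ q = (ω₁ + ω₂) * ω₁⁻¹ := by
        rw [mul_pow, inv_pow, hsum_q, hω₁q]
      have hδ0 : (ω₁ + ω₂) * ω₁⁻¹ ≠ 0 := mul_ne_zero h12' (inv_ne_zero hω₁0)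
      have hmain : ω₁ * (Y ^ q * Y) *
          ((X * Y⁻¹) ^ q + X * Y⁻¹ + (ω₁ + ω₂) * ω₁⁻¹) = 0 := by
        linear_combination (ω₁ * Y) * htYq + (ω₁ * Y ^ q) * htY + (Y ^ q * Y) * hδ1 + EM
          - (ω₁ * (X ^ q * X)) * h2K
      have hz : (X * Y⁻¹) ^ q + X * Y⁻¹ + (ω₁ + ω₂) * ω₁⁻¹ = 0 := by
        rcases mul_eq_zero.mp hmain with h' | h'
        · exact absurd h' (mul_ne_zero hω₁0 (mul_ne_zero (pow_ne_zero _ hYne) hYne))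
        · exact h'
      have hAS : (X * Y⁻¹) ^ q + X * Y⁻¹ = (ω₁ + ω₂) * ω₁⁻¹ := by
        linear_combination hz - ((ω₁ + ω₂) * ω₁⁻¹) * h2K
      exact aux_AS hq2m hcardK hδq hδ0 hAS
    · -- Case D : ω₃ = ω₂
      rw [h3] at EM
      have hrX : (Y * X⁻¹) * X = Y := by field_simp
      have hrXq : (Y * X⁻¹) ^ q * X ^ q = Y ^ q := by rw [← mul_pow, hrX]
      have hδ1 : ω₂ * ((ω₁ + ω₂) * ω₂⁻¹) = ω₁ + ω₂ := by field_simp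
      have hδq : ((ω₁ + ω₂) * ω₂⁻¹) ^ q = (ω₁ + ω₂) * ω₂⁻¹ := by
        rw [mul_pow, inv_pow, hsum_q, hω₂q]
      have hδ0 : (ω₁ + ω₂) * ω₂⁻¹ ≠ 0 := mul_ne_zero h12' (inv_ne_zero hω₂0)
      have hmain : ω₂ * (X ^ q * X) *
          ((Y * X⁻¹) ^ q + Y * X⁻¹ + (ω₁ + ω₂) * ω₂⁻¹) = 0 := by
        linear_combination (ω₂ * X) * hrXq + (ω₂ * X ^ q) * hrX + (X ^ q * X) * hδ1 + EM
          - (ω₂ * (Y ^ q * Y)) * h2K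
      have hz : (Y * X⁻¹) ^ q + Y * X⁻¹ + (ω₁ + ω₂) * ω₂⁻¹ = 0 := by
        rcases mul_eq_zero.mp hmain with h' | h'
        · exact absurd h' (mul_ne_zero hω₂0 (mul_ne_zero (pow_ne_zero _ hXne) hXne))
        · exact h'
      have hAS : (Y * X⁻¹) ^ q + Y * X⁻¹ = (ω₁ + ω₂) * ω₂⁻¹ := by
        linear_combination hz - ((ω₁ + ω₂) * ω₂⁻¹) * h2K
      exact aux_AS hq2m hcardK hδq hδ0 hAS
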